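/- Let n ≥ 2 and ζ = exp(2πi/n). The (n-1)×(n-1) complex matrix B with entries B_{ij} = ζ^{ij} - 1, for i,j ∈ {1,...,n-1}, is invertible. -/

import Mathlib

theorem stmt10 (n : ℕ) (hn : 2 ≤ n) (ζ : ℂ)
    (hζ : ζ = Complex.exp (2 * Real.pi * Complex.I / n))
    (B : Matrix (Fin (n - 1)) (Fin (n - 1)) ℂ)
    (hB : ∀ i j, B i j = ζ ^ ((i.1 + 1) * (j.1 + 1)) - 1) :
    IsUnit B := by
  have hn0 : (n : ℕ) ≠ 0 := by omega
  have hprim : IsPrimitiveRoot ζ n := by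
    rw [hζ]; exact Complex.isPrimitiveRoot_exp n hn0
  set v : Fin (n - 1) → ℂ := fun i => ζ ^ (i.1 + 1) with hv
  have hv1 : ∀ i : Fin (n - 1), v i ≠ 1 := by
    intro i
    have : i.1 + 1 < n := by omega
    exact hprim.pow_ne_one_of_pos_of_lt (Nat.succ_ne_zero _) this
  have hvinj : Function.Injective v := by
    intro i j hij
    have hi : i.1 + 1 < n := by omega
    have hj : j.1 + 1 < n := by omega
    have := hprim.pow_inj hi hj hij
    exact Fin.ext (by omega)
  set D : Matrix (Fin (n - 1)) (Fin (n - 1)) ℂ := Matrix.diagonal (fun i => v i - 1) with hD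
  set U : Matrix (Fin (n - 1)) (Fin (n - 1)) ℂ :=
    Matrix.of (fun k j : Fin (n - 1) => if (k : ℕ) ≤ j then 1 else 0) with hU
  have hfac : B = D * (Matrix.vandermonde v * U) := by
    ext i j
    rw [hB, hD, Matrix.diagonal_mul, Matrix.mul_apply]
    have hVU : ∑ k : Fin (n - 1), Matrix.vandermonde v i k * U k j
        = ∑ k ∈ Finset.range (j.1 + 1), v i ^ k := by
      have h1 : ∀ k : Fin (n - 1), Matrix.vandermonde v i k * U k j
          = if (k : ℕ) ≤ j.1 then v i ^ (k : ℕ) else 0 := by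
        intro k
        simp only [hU, Matrix.of_apply, Matrix.vandermonde_apply]
        split <;> simp
      simp only [h1]
      rw [Fin.sum_univ_eq_sum_range (fun k => if k ≤ j.1 then v i ^ k else 0)]
      rw [← Finset.sum_subset (Finset.range_subset_range.2 (by omega : j.1 + 1 ≤ n - 1))]
      · exact Finset.sum_congr rfl fun k hk => if_pos (by
          have := Finset.mem_range.1 hk; omega)
      · intro k _ hk
        exact if_neg (by simp at hk ⊢; omega)
    rw [hVU, mul_comm (v i - 1), geom_sum_mul]
    have : v i ^ (j.1 + 1) = ζ ^ ((i.1 + 1) * (j.1 + 1)) := by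
      rw [hv]; simp [← pow_mul]
    rw [this]
  rw [hfac]
  have hDu : IsUnit D := by
    rw [Matrix.isUnit_iff_isUnit_det, hD, Matrix.det_diagonal, isUnit_iff_ne_zero]
    exact Finset.prod_ne_zero_iff.2 fun i _ => sub_ne_zero_of_ne (hv1 i)
  have hVu : IsUnit (Matrix.vandermonde v) := by
    rw [Matrix.isUnit_iff_isUnit_det, Matrix.det_vandermonde, isUnit_iff_ne_zero]
    refine Finset.prod_ne_zero_iff.2 fun i _ => Finset.prod_ne_zero_iff.2 fun j hj => ?_
    have : i ≠ j := by
      intro h; subst h; simp [Finset.mem_Ioi] at hj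
    exact sub_ne_zero_of_ne fun h => this (hvinj h).symm
  have hUu : IsUnit U := by
    rw [Matrix.isUnit_iff_isUnit_det]
    have ht : U.BlockTriangular id := by
      intro k j hjk
      simp only [hU, Matrix.of_apply]
      rw [if_neg]
      simp only [id] at hjk
      omega
    rw [Matrix.det_of_upperTriangular ht]
    simp [hU]
  exact hDu.mul (hVu.mul hUu)
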